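/- Let q be a power of an odd prime p with q ≡ 1 (mod 3) and F = 𝔽_q, and let φ be an automorphism of the graph R. If φ([0,0,r]) = [0,0,r] for some r ∈ F, then φ([0,0,r−k]) = [0,0,r−k] for every element k of the prime subfield 𝔽_p of F (i.e., for every k that is an integer multiple of 1 in F). -/

import Mathlib

/-- Vertices: points (left component) and lines (right component), each a triple over `F`. -/
abbrev Vtx (F : Type) := (F × F × F) ⊕ (F × F × F)

/-- Adjacency for the graph `Γ_F(p₁ℓ₁, g(p₁,p₂,ℓ₁))`: a point `(p₁,p₂,p₃)` and a line
`[ℓ₁,ℓ₂,ℓ₃]` are adjacent iff `p₂+ℓ₂ = p₁ℓ₁` and `p₃+ℓ₃ = g(p₁,p₂,ℓ₁)`. -/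
def gammaAdj (F : Type) [Field F] (g : F → F → F → F) : Vtx F → Vtx F → Prop
  | Sum.inl p, Sum.inr l => p.2.1 + l.2.1 = p.1 * l.1 ∧ p.2.2 + l.2.2 = g p.1 p.2.1 l.1
  | Sum.inr l, Sum.inl p => p.2.1 + l.2.1 = p.1 * l.1 ∧ p.2.2 + l.2.2 = g p.1 p.2.1 l.1
  | _, _ => False

/-- The bipartite graph `Γ_F(p₁ℓ₁, g(p₁,p₂,ℓ₁))`. -/
def Gamma (F : Type) [Field F] (g : F → F → F → F) : SimpleGraph (Vtx F) where
  Adj := gammaAdj F g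
  symm := by
    constructor
    intro v w h
    match v, w with
    | Sum.inl p, Sum.inr l => exact h
    | Sum.inr l, Sum.inl p => exact h
  loopless := by
    constructor
    intro v h
    match v with
    | Sum.inl p => exact h
    | Sum.inr l => exact h

/-- The graph `R = Γ_F(p₁ℓ₁, p₁p₂ℓ₁(p₁+p₂+p₁p₂))`. -/
def RGraph (F : Type) [Field F] : SimpleGraph (Vtx F) :=
  Gamma F (fun p1 p2 l1 => p1 * p2 * l1 * (p1 + p2 + p1 * p2))

section AutProof

variable {F : Type} [Field F]

private lemma adjPL {x y z a b c : F} :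
    (RGraph F).Adj (Sum.inl (x, y, z)) (Sum.inr (a, b, c)) ↔
      y + b = x * a ∧ z + c = x * y * a * (x + y + x * y) := Iff.rfl

private lemma adjLP {x y z a b c : F} :
    (RGraph F).Adj (Sum.inr (a, b, c)) (Sum.inl (x, y, z)) ↔
      y + b = x * a ∧ z + c = x * y * a * (x + y + x * y) := Iff.rfl

private lemma nadjLL (a b : F × F × F) :
    ¬ (RGraph F).Adj (Sum.inr a) (Sum.inr b) := fun h => h

private lemma nadjPP (a b : F × F × F) :
    ¬ (RGraph F).Adj (Sum.inl a) (Sum.inl b) := fun h => h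

/-- `Q` is a "special" vertex relative to the vertex `L`: it is not adjacent to `L`
and has two distinct neighbours among vertices (≠ `L`) having a common neighbour
with `L`. -/
private def Spec (L Q : Vtx F) : Prop :=
  ¬ (RGraph F).Adj Q L ∧
  ∃ M M' : Vtx F, M ≠ M' ∧ M ≠ L ∧ M' ≠ L ∧
    (∃ X, (RGraph F).Adj L X ∧ (RGraph F).Adj X M) ∧
    (∃ X, (RGraph F).Adj L X ∧ (RGraph F).Adj X M') ∧
    (RGraph F).Adj Q M ∧ (RGraph F).Adj Q M'

/-- The canonical-successor predicate: `W ≠ L`, `W` has no common neighbour with `L`,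
`W` has a special neighbour, and all special neighbours of `W` coincide. -/
private def P1 (L W : Vtx F) : Prop :=
  W ≠ L ∧ (¬ ∃ X, (RGraph F).Adj L X ∧ (RGraph F).Adj X W) ∧
  (∃ Q, Spec L Q ∧ (RGraph F).Adj Q W) ∧
  (∀ Q Q', Spec L Q → Spec L Q' → (RGraph F).Adj Q W → (RGraph F).Adj Q' W → Q = Q')

/-- There is a walk of length 4 from `L` to `W`. -/
private def Walk4 (L W : Vtx F) : Prop :=
  ∃ X M Z, (RGraph F).Adj L X ∧ (RGraph F).Adj X M ∧
    (RGraph F).Adj M Z ∧ (RGraph F).Adj Z W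

private lemma spec_map (φ : RGraph F ≃g RGraph F) {L Q : Vtx F} (h : Spec L Q) :
    Spec (φ L) (φ Q) := by
  obtain ⟨h0, M, M', hMM', hML, hM'L, ⟨X, hX1, hX2⟩, ⟨X', hX1', hX2'⟩, hQM, hQM'⟩ := h
  refine ⟨fun hc => h0 (φ.map_adj_iff.mp hc), φ M, φ M',
    fun hc => hMM' (φ.injective hc), fun hc => hML (φ.injective hc),
    fun hc => hM'L (φ.injective hc),
    ⟨φ X, φ.map_adj_iff.mpr hX1, φ.map_adj_iff.mpr hX2⟩,
    ⟨φ X', φ.map_adj_iff.mpr hX1', φ.map_adj_iff.mpr hX2'⟩,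
    φ.map_adj_iff.mpr hQM, φ.map_adj_iff.mpr hQM'⟩

private lemma P1_map (φ : RGraph F ≃g RGraph F) {L W : Vtx F} (h : P1 L W) :
    P1 (φ L) (φ W) := by
  obtain ⟨h1, h2, ⟨Q, hQ, hA⟩, h4⟩ := h
  refine ⟨fun hc => h1 (φ.injective hc), ?_,
    ⟨φ Q, spec_map φ hQ, φ.map_adj_iff.mpr hA⟩, ?_⟩
  · rintro ⟨X, hX1, hX2⟩
    refine h2 ⟨φ.symm X, ?_, ?_⟩
    · have := φ.symm.map_adj_iff.mpr hX1
      rwa [φ.symm_apply_apply] at this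
    · have := φ.symm.map_adj_iff.mpr hX2
      rwa [φ.symm_apply_apply] at this
  · intro Q1 Q2 hs1 hs2 ha1 ha2
    have e1 : Spec L (φ.symm Q1) := by
      have := spec_map φ.symm hs1
      rwa [φ.symm_apply_apply] at this
    have e2 : Spec L (φ.symm Q2) := by
      have := spec_map φ.symm hs2
      rwa [φ.symm_apply_apply] at this
    have a1 : (RGraph F).Adj (φ.symm Q1) W := by
      have := φ.symm.map_adj_iff.mpr ha1
      rwa [φ.symm_apply_apply] at this
    have a2 : (RGraph F).Adj (φ.symm Q2) W := by
      have := φ.symm.map_adj_iff.mpr ha2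
      rwa [φ.symm_apply_apply] at this
    have hQQ := h4 _ _ e1 e2 a1 a2
    have := congrArg φ hQQ
    rwa [φ.apply_symm_apply, φ.apply_symm_apply] at this

private lemma walk4_map (φ : RGraph F ≃g RGraph F) {L W : Vtx F} (h : Walk4 L W) :
    Walk4 (φ L) (φ W) := by
  obtain ⟨X, M, Z, h1, h2, h3, h4⟩ := h
  exact ⟨φ X, φ M, φ Z, φ.map_adj_iff.mpr h1, φ.map_adj_iff.mpr h2,
    φ.map_adj_iff.mpr h3, φ.map_adj_iff.mpr h4⟩

/-- Characterization of special vertices relative to the line `[0,0,s]`. -/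
private lemma spec0_iff (h2 : (2 : F) ≠ 0) {s : F} {Q : Vtx F} :
    Spec (Sum.inr (0, 0, s)) Q ↔
      ∃ x y : F, Q = Sum.inl (x, y, -s) ∧ y ≠ 0 ∧ x * (x + y + x * y) = 0 := by
  constructor
  · rintro ⟨hQL, M, M', hMM', hML, hM'L, ⟨X, hLX, hXM⟩, ⟨X', hLX', hXM'⟩, hQM, hQM'⟩
    obtain ⟨a, b, c⟩ | X0 := X
    swap
    · exact absurd hLX (nadjLL _ _)
    obtain ⟨hb, hc⟩ := adjLP.mp hLX
    have hb0 : b = 0 := by linear_combination hb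
    have hc0 : c = -s := by linear_combination hc
    subst hb0; subst hc0
    obtain M0 | ⟨m1, m2, m3⟩ := M
    · exact absurd hXM (nadjPP _ _)
    obtain ⟨e1, e2⟩ := adjPL.mp hXM
    have hm2 : m2 = a * m1 := by linear_combination e1
    have hm3 : m3 = s := by linear_combination e2
    have hm1 : m1 ≠ 0 := by
      intro h0
      apply hML
      rw [hm3, hm2, h0]
      norm_num
    obtain ⟨a', b', c'⟩ | X0' := X'
    swap
    · exact absurd hLX' (nadjLL _ _)
    obtain ⟨hb', hc'⟩ := adjLP.mp hLX'
    have hb0' : b' = 0 := by linear_combination hb'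
    have hc0' : c' = -s := by linear_combination hc'
    subst hb0'; subst hc0'
    obtain M0' | ⟨m1', m2', m3'⟩ := M'
    · exact absurd hXM' (nadjPP _ _)
    obtain ⟨e1', e2'⟩ := adjPL.mp hXM'
    have hm2' : m2' = a' * m1' := by linear_combination e1'
    have hm3' : m3' = s := by linear_combination e2'
    obtain ⟨x, y, z⟩ | Q0 := Q
    swap
    · exact absurd hQM (nadjLL _ _)
    obtain ⟨f1, f2⟩ := adjPL.mp hQM
    obtain ⟨g1, g2⟩ := adjPL.mp hQM'
    have hne : m1 - m1' ≠ 0 := by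
      intro hEq
      apply hMM'
      have h21 : m2 = m2' := by linear_combination f1 - g1 + x * hEq
      rw [hm3, hm3', h21, sub_eq_zero.mp hEq]
    have hfac : (m1 - m1') * (x * y * (x + y + x * y)) = 0 := by
      linear_combination g2 - f2 + hm3 - hm3'
    have hxy : x * y * (x + y + x * y) = 0 :=
      (mul_eq_zero.mp hfac).resolve_left hne
    have hz : z = -s := by linear_combination f2 - hm3 + m1 * hxy
    have hy : y ≠ 0 := by
      intro hy0
      apply hQL
      subst hy0; subst hz
      exact adjPL.mpr ⟨by ring, by ring⟩
    have hx : x * (x + y + x * y) = 0 := by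
      have h' : y * (x * (x + y + x * y)) = 0 := by linear_combination hxy
      exact (mul_eq_zero.mp h').resolve_left hy
    exact ⟨x, y, by rw [hz], hy, hx⟩
  · rintro ⟨x, y, rfl, hy, hx⟩
    refine ⟨?_, Sum.inr (1, x - y, s), Sum.inr (-1, -x - y, s), ?_, ?_, ?_,
      ⟨Sum.inl (x - y, 0, -s), adjLP.mpr ⟨by ring, by ring⟩,
        adjPL.mpr ⟨by ring, by ring⟩⟩,
      ⟨Sum.inl (x + y, 0, -s), adjLP.mpr ⟨by ring, by ring⟩,
        adjPL.mpr ⟨by ring, by ring⟩⟩,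
      adjPL.mpr ⟨by ring, by linear_combination (-y) * hx⟩,
      adjPL.mpr ⟨by ring, by linear_combination y * hx⟩⟩
    · intro hadj
      obtain ⟨h1, -⟩ := adjPL.mp hadj
      exact hy (by linear_combination h1)
    · simp only [ne_eq, Sum.inr.injEq, Prod.mk.injEq, not_and]
      intro h1
      exact absurd (by linear_combination h1 : (2 : F) = 0) h2
    · simp only [ne_eq, Sum.inr.injEq, Prod.mk.injEq, not_and]
      intro h1
      exact absurd h1 one_ne_zero
    · simp only [ne_eq, Sum.inr.injEq, Prod.mk.injEq, not_and]
      intro h1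
      exact absurd h1 (neg_ne_zero.mpr one_ne_zero)

/-- Characterization of special vertices relative to the line `[0,1,s]`. -/
private lemma spec1_iff (h2 : (2 : F) ≠ 0) {s : F} {Q : Vtx F} :
    Spec (Sum.inr (0, 1, s)) Q ↔
      ∃ x y : F, Q = Sum.inl (x, y, y + 1 - s) ∧ y ≠ -1 ∧
        (x = 0 ∨ y * (x + y + x * y) = 1) := by
  constructor
  · rintro ⟨hQL, M, M', hMM', hML, hM'L, ⟨X, hLX, hXM⟩, ⟨X', hLX', hXM'⟩, hQM, hQM'⟩
    obtain ⟨a, b, c⟩ | X0 := X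
    swap
    · exact absurd hLX (nadjLL _ _)
    obtain ⟨hb, hc⟩ := adjLP.mp hLX
    have hb0 : b = -1 := by linear_combination hb
    have hc0 : c = -s := by linear_combination hc
    subst hb0; subst hc0
    obtain M0 | ⟨m1, m2, m3⟩ := M
    · exact absurd hXM (nadjPP _ _)
    obtain ⟨e1, e2⟩ := adjPL.mp hXM
    have hm3 : m3 = m2 - 1 + s := by linear_combination e2 - e1
    have hm1 : m1 ≠ 0 := by
      intro h0
      apply hML
      have hm2 : m2 = 1 := by linear_combination e1 + a * h0
      rw [hm3, hm2, h0]
      norm_num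
    obtain ⟨a', b', c'⟩ | X0' := X'
    swap
    · exact absurd hLX' (nadjLL _ _)
    obtain ⟨hb', hc'⟩ := adjLP.mp hLX'
    have hb0' : b' = -1 := by linear_combination hb'
    have hc0' : c' = -s := by linear_combination hc'
    subst hb0'; subst hc0'
    obtain M0' | ⟨m1', m2', m3'⟩ := M'
    · exact absurd hXM' (nadjPP _ _)
    obtain ⟨e1', e2'⟩ := adjPL.mp hXM'
    have hm3' : m3' = m2' - 1 + s := by linear_combination e2' - e1'
    obtain ⟨x, y, z⟩ | Q0 := Q
    swap
    · exact absurd hQM (nadjLL _ _)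
    obtain ⟨f1, f2⟩ := adjPL.mp hQM
    obtain ⟨g1, g2⟩ := adjPL.mp hQM'
    have hA : m1 * (x - x * y * (x + y + x * y)) = y + 1 - s - z := by
      linear_combination (-1 : F) * f1 + f2 - hm3
    have hA' : m1' * (x - x * y * (x + y + x * y)) = y + 1 - s - z := by
      linear_combination (-1 : F) * g1 + g2 - hm3'
    have hne : m1 - m1' ≠ 0 := by
      intro hEq
      apply hMM'
      have h21 : m2 = m2' := by linear_combination f1 - g1 + x * hEq
      rw [hm3, hm3', h21, sub_eq_zero.mp hEq]
    have hfac : (m1 - m1') * (x - x * y * (x + y + x * y)) = 0 := by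
      linear_combination hA - hA'
    have hkey : x - x * y * (x + y + x * y) = 0 :=
      (mul_eq_zero.mp hfac).resolve_left hne
    have hz : z = y + 1 - s := by linear_combination hA - m1 * hkey
    have hy : y ≠ -1 := by
      intro hy1
      apply hQL
      subst hy1
      rw [hz]
      exact adjPL.mpr ⟨by ring, by ring⟩
    have hcond : x = 0 ∨ y * (x + y + x * y) = 1 := by
      have h' : x * (1 - y * (x + y + x * y)) = 0 := by linear_combination hkey
      rcases mul_eq_zero.mp h' with h | h
      · exact Or.inl h
      · exact Or.inr (by linear_combination (-1 : F) * h)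
    exact ⟨x, y, by rw [hz], hy, hcond⟩
  · rintro ⟨x, y, rfl, hy, hcond⟩
    refine ⟨?_, Sum.inr (1, x - y, x - y - 1 + s), Sum.inr (-1, -x - y, -x - y - 1 + s),
      ?_, ?_, ?_,
      ⟨Sum.inl (x - y - 1, -1, -s), adjLP.mpr ⟨by ring, by ring⟩,
        adjPL.mpr ⟨by ring, by ring⟩⟩,
      ⟨Sum.inl (x + y + 1, -1, -s), adjLP.mpr ⟨by ring, by ring⟩,
        adjPL.mpr ⟨by ring, by ring⟩⟩,
      adjPL.mpr ⟨by ring, ?_⟩, adjPL.mpr ⟨by ring, ?_⟩⟩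
    · intro hadj
      obtain ⟨h1, -⟩ := adjPL.mp hadj
      exact hy (by linear_combination h1)
    · simp only [ne_eq, Sum.inr.injEq, Prod.mk.injEq, not_and]
      intro h1
      exact absurd (by linear_combination h1 : (2 : F) = 0) h2
    · simp only [ne_eq, Sum.inr.injEq, Prod.mk.injEq, not_and]
      intro h1
      exact absurd h1 one_ne_zero
    · simp only [ne_eq, Sum.inr.injEq, Prod.mk.injEq, not_and]
      intro h1
      exact absurd h1 (neg_ne_zero.mpr one_ne_zero)
    · rcases hcond with h | h
      · linear_combination (1 - y * (x + y + x * y)) * h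
      · linear_combination (-x) * h
    · rcases hcond with h | h
      · linear_combination (-1 + y * (x + y + x * y)) * h
      · linear_combination x * h

/-- The unique vertex satisfying `P1` relative to `[0,0,s]` is the line `[0,1,s]`. -/
private lemma P1_zero_iff (h2 : (2 : F) ≠ 0) {s : F} {W : Vtx F} :
    P1 (Sum.inr (0, 0, s)) W ↔ W = Sum.inr (0, 1, s) := by
  constructor
  · rintro ⟨hneW, hnc, ⟨Q, hQs, hQW⟩, huniq⟩
    obtain ⟨x, y, rfl, hy, hx⟩ := (spec0_iff h2).mp hQs
    obtain W0 | ⟨w1, w2, w3⟩ := W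
    · exact absurd hQW (nadjPP _ _)
    obtain ⟨f1, f2⟩ := adjPL.mp hQW
    have hw3 : w3 = s := by linear_combination f2 + w1 * y * hx
    have hw1 : w1 = 0 := by
      by_contra hw1ne
      apply hnc
      refine ⟨Sum.inl (w2 / w1, 0, -s), adjLP.mpr ⟨by ring, by ring⟩,
        adjPL.mpr ⟨?_, ?_⟩⟩
      · field_simp
        ring
      · rw [hw3]; ring
    subst hw1
    have hw2y : w2 = -y := by linear_combination f1
    have hw21 : w2 = 1 := by
      by_contra hne1
      have h1md : (1 : F) - w2 ≠ 0 := fun hcontr => hne1 (by linear_combination (-1 : F) * hcontr)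
      have hw2ne : w2 ≠ 0 := fun h0 => hy (by linear_combination hw2y - h0)
      have hQ1 : Spec (Sum.inr (0, 0, s) : Vtx F) (Sum.inl (0, -w2, -s)) :=
        (spec0_iff h2).mpr ⟨0, -w2, rfl, neg_ne_zero.mpr hw2ne, by ring⟩
      have hxx : w2 / (1 - w2) * (1 - w2) = w2 := div_mul_cancel₀ _ h1md
      have hQ2 : Spec (Sum.inr (0, 0, s) : Vtx F) (Sum.inl (w2 / (1 - w2), -w2, -s)) :=
        (spec0_iff h2).mpr ⟨w2 / (1 - w2), -w2, rfl, neg_ne_zero.mpr hw2ne,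
          by linear_combination (w2 / (1 - w2)) * hxx⟩
      have hA1 : (RGraph F).Adj (Sum.inl (0, -w2, -s)) (Sum.inr (0, w2, w3)) :=
        adjPL.mpr ⟨by ring, by rw [hw3]; ring⟩
      have hA2 : (RGraph F).Adj (Sum.inl (w2 / (1 - w2), -w2, -s)) (Sum.inr (0, w2, w3)) :=
        adjPL.mpr ⟨by ring, by rw [hw3]; ring⟩
      have hEq := huniq _ _ hQ1 hQ2 hA1 hA2
      simp only [Sum.inl.injEq, Prod.mk.injEq] at hEq
      exact (div_ne_zero hw2ne h1md) hEq.1.symm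
    rw [hw21, hw3]
  · rintro rfl
    refine ⟨?_, ?_, ⟨Sum.inl (0, -1, -s),
      (spec0_iff h2).mpr ⟨0, -1, rfl, neg_ne_zero.mpr one_ne_zero, by ring⟩,
      adjPL.mpr ⟨by ring, by ring⟩⟩, ?_⟩
    · simp only [ne_eq, Sum.inr.injEq, Prod.mk.injEq, not_and]
      intro _ h1
      exact absurd h1 one_ne_zero
    · rintro ⟨X, hLX, hXW⟩
      obtain ⟨a, b, c⟩ | X0 := X
      swap
      · exact absurd hLX (nadjLL _ _)
      obtain ⟨h1, -⟩ := adjLP.mp hLX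
      obtain ⟨h1', -⟩ := adjPL.mp hXW
      exact one_ne_zero (by linear_combination h1' - h1 : (1 : F) = 0)
    · intro Q Q' hQ hQ' hA hA'
      obtain ⟨x, y, rfl, hy, hx⟩ := (spec0_iff h2).mp hQ
      obtain ⟨x', y', rfl, hy', hx'⟩ := (spec0_iff h2).mp hQ'
      obtain ⟨a1, -⟩ := adjPL.mp hA
      obtain ⟨a1', -⟩ := adjPL.mp hA'
      have hy1 : y = -1 := by linear_combination a1
      have hy1' : y' = -1 := by linear_combination a1'
      have hx0 : x = 0 := by
        subst hy1
        linear_combination (-1 : F) * hx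
      have hx0' : x' = 0 := by
        subst hy1'
        linear_combination (-1 : F) * hx'
      rw [hy1, hy1', hx0, hx0']

/-- The unique vertex satisfying `P1` relative to `[0,1,s]` together with the absence
of a 4-walk from `[0,0,s]` is the line `[0,0,s-1]`. -/
private lemma step_iff (h2 : (2 : F) ≠ 0) {s : F} {W : Vtx F} :
    (P1 (Sum.inr (0, 1, s)) W ∧ ¬ Walk4 (Sum.inr (0, 0, s)) W) ↔
      W = Sum.inr (0, 0, s - 1) := by
  constructor
  · rintro ⟨⟨hneW, hnc, ⟨Q, hQs, hQW⟩, huniq⟩, hnw⟩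
    obtain ⟨x, y, rfl, hy, hcond⟩ := (spec1_iff h2).mp hQs
    obtain W0 | ⟨w1, w2, w3⟩ := W
    · exact absurd hQW (nadjPP _ _)
    obtain ⟨f1, f2⟩ := adjPL.mp hQW
    have hw1 : w1 = 0 := by
      by_contra hw1ne
      apply hnc
      have hw3 : w3 = w2 - 1 + s := by
        rcases hcond with h | h
        · linear_combination f2 - f1 + (y * w1 * (x + y + x * y) - w1) * h
        · linear_combination f2 - f1 + x * w1 * h
      refine ⟨Sum.inl ((w2 - 1) / w1, -1, -s), adjLP.mpr ⟨by ring, by ring⟩,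
        adjPL.mpr ⟨?_, ?_⟩⟩
      · field_simp
        ring
      · rw [hw3]
        field_simp
        ring
    subst hw1
    have hw2 : w2 = -y := by linear_combination f1
    have hw3 : w3 = s - 1 - y := by linear_combination f2
    have hy0 : y = 0 := by
      by_contra hyne
      by_cases hy1 : y = 1
      · apply hnw
        refine ⟨Sum.inl (0, 0, -s), Sum.inr (2, 0, s), Sum.inl (2⁻¹, 1, 2 - s),
          adjLP.mpr ⟨by ring, by ring⟩, adjPL.mpr ⟨by ring, by ring⟩,
          adjLP.mpr ⟨?_, ?_⟩, adjPL.mpr ⟨?_, ?_⟩⟩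
        · rw [inv_mul_cancel₀ h2]; norm_num
        · have hinv : (2 : F)⁻¹ * 2 = 1 := inv_mul_cancel₀ h2
          linear_combination (-2 * (2 : F)⁻¹ - 2) * hinv
        · rw [hw2, hy1]; ring
        · rw [hw3, hy1]; ring
      · have h1my : (1 : F) - y ≠ 0 := fun hcontr => hy1 (by linear_combination (-1 : F) * hcontr)
        have hQA : Spec (Sum.inr (0, 1, s) : Vtx F) (Sum.inl (0, y, y + 1 - s)) :=
          (spec1_iff h2).mpr ⟨0, y, rfl, hy, Or.inl rfl⟩
        have hQB : Spec (Sum.inr (0, 1, s) : Vtx F)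
            (Sum.inl ((1 - y) / y, y, y + 1 - s)) := by
          refine (spec1_iff h2).mpr ⟨(1 - y) / y, y, rfl, hy, Or.inr ?_⟩
          have hxx : (1 - y) / y * y = 1 - y := div_mul_cancel₀ _ hyne
          linear_combination (1 + y) * hxx
        have hA1 : (RGraph F).Adj (Sum.inl (0, y, y + 1 - s)) (Sum.inr (0, w2, w3)) :=
          adjPL.mpr ⟨by rw [hw2]; ring, by rw [hw3]; ring⟩
        have hA2 : (RGraph F).Adj (Sum.inl ((1 - y) / y, y, y + 1 - s))
            (Sum.inr (0, w2, w3)) :=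
          adjPL.mpr ⟨by rw [hw2]; ring, by rw [hw3]; ring⟩
        have hEq := huniq _ _ hQA hQB hA1 hA2
        simp only [Sum.inl.injEq, Prod.mk.injEq] at hEq
        exact (div_ne_zero h1my hyne) hEq.1.symm
    rw [hw2, hw3, hy0]
    norm_num
  · rintro rfl
    refine ⟨⟨?_, ?_, ⟨Sum.inl (0, 0, 1 - s),
      (spec1_iff h2).mpr ⟨0, 0, by norm_num, by norm_num, Or.inl rfl⟩,
      adjPL.mpr ⟨by ring, by ring⟩⟩, ?_⟩, ?_⟩
    · simp only [ne_eq, Sum.inr.injEq, Prod.mk.injEq, not_and]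
      intro _ h1
      exact absurd h1 zero_ne_one
    · rintro ⟨X, hLX, hXW⟩
      obtain ⟨a, b, c⟩ | X0 := X
      swap
      · exact absurd hLX (nadjLL _ _)
      obtain ⟨h1, -⟩ := adjLP.mp hLX
      obtain ⟨h1', -⟩ := adjPL.mp hXW
      exact one_ne_zero (by linear_combination h1 - h1' : (1 : F) = 0)
    · intro Q Q' hQ hQ' hA hA'
      obtain ⟨x, y, rfl, hy, hcond⟩ := (spec1_iff h2).mp hQ
      obtain ⟨x', y', rfl, hy', hcond'⟩ := (spec1_iff h2).mp hQ'
      obtain ⟨a1, -⟩ := adjPL.mp hA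
      obtain ⟨a1', -⟩ := adjPL.mp hA'
      have hy0 : y = 0 := by linear_combination a1
      have hy0' : y' = 0 := by linear_combination a1'
      have hx0 : x = 0 := by
        rcases hcond with h | h
        · exact h
        · rw [hy0] at h
          exact absurd (by linear_combination h : (0 : F) = 1) (by norm_num)
      have hx0' : x' = 0 := by
        rcases hcond' with h | h
        · exact h
        · rw [hy0'] at h
          exact absurd (by linear_combination h : (0 : F) = 1) (by norm_num)
      rw [hy0, hy0', hx0, hx0']
    · rintro ⟨X, M, Z, h1, h2', h3, h4⟩
      obtain ⟨a, b, c⟩ | X0 := X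
      swap
      · exact absurd h1 (nadjLL _ _)
      obtain ⟨hb, hc⟩ := adjLP.mp h1
      have hb0 : b = 0 := by linear_combination hb
      have hc0 : c = -s := by linear_combination hc
      obtain M0 | ⟨m1, m2, m3⟩ := M
      · exact absurd h2' (nadjPP _ _)
      obtain ⟨e1, e2⟩ := adjPL.mp h2'
      have hm3 : m3 = s := by
        linear_combination e2 - hc0 + a * m1 * (a + b + a * b) * hb0
      obtain ⟨z1, z2, z3⟩ | Z0 := Z
      swap
      · exact absurd h3 (nadjLL _ _)
      obtain ⟨k1, k2⟩ := adjLP.mp h3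
      obtain ⟨l1, l2⟩ := adjPL.mp h4
      have hz2 : z2 = 0 := by linear_combination l1
      have hz3 : z3 = 1 - s := by linear_combination l2
      have : (1 : F) = 0 := by
        linear_combination k2 - hz3 - hm3 + z1 * m1 * (z1 + z2 + z1 * z2) * hz2
      exact one_ne_zero this

/-- Key step: an automorphism fixing the line `[0,0,s]` also fixes `[0,0,s-1]`. -/
private lemma fix_step (h2 : (2 : F) ≠ 0) (φ : RGraph F ≃g RGraph F) (s : F)
    (h : φ (Sum.inr (0, 0, s)) = Sum.inr (0, 0, s)) :
    φ (Sum.inr (0, 0, s - 1)) = Sum.inr (0, 0, s - 1) := by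
  have hΛ : φ (Sum.inr (0, 1, s)) = Sum.inr (0, 1, s) := by
    have h1 : P1 (Sum.inr (0, 0, s) : Vtx F) (Sum.inr (0, 1, s)) := (P1_zero_iff h2).mpr rfl
    have h1' := P1_map φ h1
    rw [h] at h1'
    exact (P1_zero_iff h2).mp h1'
  have hsymm0 : φ.symm (Sum.inr (0, 0, s) : Vtx F) = Sum.inr (0, 0, s) := by
    conv_lhs => rw [← h]
    exact φ.symm_apply_apply _
  have hc : P1 (Sum.inr (0, 1, s) : Vtx F) (Sum.inr (0, 0, s - 1)) ∧
      ¬ Walk4 (Sum.inr (0, 0, s) : Vtx F) (Sum.inr (0, 0, s - 1)) := (step_iff h2).mpr rfl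
  have hA := P1_map φ hc.1
  rw [hΛ] at hA
  have hB : ¬ Walk4 (Sum.inr (0, 0, s) : Vtx F) (φ (Sum.inr (0, 0, s - 1))) := by
    intro hw
    apply hc.2
    have hw' := walk4_map φ.symm hw
    rw [hsymm0, φ.symm_apply_apply] at hw'
    exact hw'
  exact (step_iff h2).mp ⟨hA, hB⟩

end AutProof

/-- Let `q` be a power of an odd prime `p` with `q ≡ 1 (mod 3)`, `F = 𝔽_q`, and `φ` an
automorphism of `R`. If `φ([0,0,r]) = [0,0,r]` for some `r ∈ F`, then
`φ([0,0,r−k]) = [0,0,r−k]` for every `k` in the prime subfield of `F`, i.e. for every `k`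
that is an integer multiple of `1` in `F`. -/
theorem aut_fixes_shifts (q p e : ℕ) (hp : p.Prime) (hodd : Odd p) (he : 1 ≤ e)
    (hq : q = p ^ e) (hmod : q % 3 = 1) (F : Type) [Field F] [Fintype F]
    (hcard : Fintype.card F = q) (φ : RGraph F ≃g RGraph F) (r : F)
    (h : φ (Sum.inr (0, 0, r)) = Sum.inr (0, 0, r)) :
    ∀ n : ℕ, φ (Sum.inr (0, 0, r - (n : F))) = Sum.inr (0, 0, r - (n : F)) := by
  have h2 : (2 : F) ≠ 0 := by
    intro h20
    haveI : CharP F (ringChar F) := ringChar.charP F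
    obtain ⟨n, hcp, hcn⟩ := FiniteField.card F (ringChar F)
    have hdvd : ringChar F ∣ 2 := by
      have h2n : ((2 : ℕ) : F) = 0 := by exact_mod_cast h20
      exact (CharP.cast_eq_zero_iff F (ringChar F) 2).mp h2n
    have hc2 : ringChar F = 2 := (Nat.prime_dvd_prime_iff_eq hcp Nat.prime_two).mp hdvd
    have hpe : p ^ e = 2 ^ (n : ℕ) := by rw [← hq, ← hcard, hcn, hc2]
    have hpd : p ∣ 2 ^ (n : ℕ) := hpe ▸ dvd_pow_self p (by omega : e ≠ 0)
    have hp2 : p = 2 := (Nat.prime_dvd_prime_iff_eq hp Nat.prime_two).mp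
      (hp.dvd_of_dvd_pow hpd)
    rw [hp2] at hodd
    simp [Nat.odd_iff] at hodd
  intro n
  induction n with
  | zero => simpa using h
  | succ n ih =>
    have hs := fix_step h2 φ (r - (n : F)) ih
    have heq : ((n + 1 : ℕ) : F) = (n : F) + 1 := by push_cast; ring
    rw [heq, sub_add_eq_sub_sub]
    exact hs
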